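/- Suppose w̃ ∈ Wtf admits a factorization w̃ = w̃₂^{−1} w′ w̃₁ with w′ ∈ Wf, w̃₁, w̃₂ ∈ Wtf⁺, and w̃₁ ↑ w̃_h^{−1} w̃₂. Then w̃ also admits a factorization w̃ = w̃₃^{−1} w″ w̃_λ with w″ ∈ Wf, w̃₃, w̃_λ ∈ Wtf⁺, w̃_λ ↑ w̃_h^{−1} w̃₃, and moreover w̃_λ · C₀ a p-restricted p-alcove. -/

import Mathlib

/-!
Common setup: the extended affine Weyl group of `GL_n` (f-fold product), its dot
action on `(ℝ^n)^f`, p-alcoves, lengths, Bruhat orders (dominant and antidominant),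
the up (↑) order, admissible sets, and the combinatorics of lowest alcove
presentations, following Le–Le Hung–Levin, "Weight elimination in Serre-type
conjectures".
-/

noncomputable section

namespace LLLSerre

open scoped BigOperators

/-- `η₀ = (n-1, n-2, …, 1, 0)`. -/
def eta0 (n : ℕ) : Fin n → ℤ := fun i => (n : ℤ) - 1 - (i : ℤ)

/-- The action of a permutation on a vector: `(σ x) i = x (σ⁻¹ i)`. -/
def permAct {n : ℕ} {α : Type*} (σ : Equiv.Perm (Fin n)) (x : Fin n → α) : Fin n → α :=
  fun i => x (σ⁻¹ i)

/-- The weight lattice `Xf = (ℤ^n)^f`. -/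
abbrev Xf (n f : ℕ) := Fin f → Fin n → ℤ

/-- The f-fold product of Weyl groups `Wf = (S_n)^f`. -/
abbrev WfG (n f : ℕ) := Fin f → Equiv.Perm (Fin n)

/-- Points of `(ℝ^n)^f`. -/
abbrev RPt (n f : ℕ) := Fin f → Fin n → ℝ

/-- The extended affine Weyl group `Wtf = (X ⋊ W)^f`; the pair `(w, ν)` represents
`w t_ν`. -/
structure Wtf (n f : ℕ) where
  w : WfG n f
  t : Xf n f

/-- Multiplication in `Wtf`: `(w₁ t_{ν₁})(w₂ t_{ν₂}) = w₁w₂ t_{ν₂ + w₂⁻¹(ν₁)}`. -/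
def Wtf.mul {n f : ℕ} (a b : Wtf n f) : Wtf n f :=
  ⟨fun j => a.w j * b.w j, fun j => b.t j + permAct (b.w j)⁻¹ (a.t j)⟩

/-- Inversion in `Wtf`: `(w t_ν)⁻¹ = w⁻¹ t_{-w(ν)}`. -/
def Wtf.inv {n f : ℕ} (a : Wtf n f) : Wtf n f :=
  ⟨fun j => (a.w j)⁻¹, fun j => -(permAct (a.w j) (a.t j))⟩

/-- Embedding of the finite Weyl group `Wf` in `Wtf`. -/
def ofW {n f : ℕ} (w : WfG n f) : Wtf n f := ⟨w, fun _ _ => 0⟩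

/-- The translation `t_ν ∈ Wtf`. -/
def transl {n f : ℕ} (ν : Xf n f) : Wtf n f := ⟨fun _ => 1, ν⟩

/-- `η = (η₀, …, η₀) ∈ Xf`. -/
def etaf (n f : ℕ) : Xf n f := fun _ => eta0 n

/-- The longest element `w₀ ∈ Wf`. -/
def w0f (n f : ℕ) : WfG n f := fun _ => Fin.revPerm

/-- `w₀` as an element of `Wtf`. -/
def w0Elt (n f : ℕ) : Wtf n f := ofW (w0f n f)

/-- `w̃_h = w₀ t_{-η} ∈ Wtf`. -/
def whElt (n f : ℕ) : Wtf n f := ⟨w0f n f, fun _ i => -(eta0 n i)⟩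

/-- The dot action of `Wtf` on `(ℝ^n)^f`: `(w t_ν) · x = w(x + η + pν) − η`. -/
def dotR {n f : ℕ} (p : ℕ) (a : Wtf n f) (x : RPt n f) : RPt n f :=
  fun j i =>
    (x j ((a.w j)⁻¹ i) + ((eta0 n ((a.w j)⁻¹ i) : ℤ) : ℝ)
      + (p : ℝ) * ((a.t j ((a.w j)⁻¹ i) : ℤ) : ℝ)) - ((eta0 n i : ℤ) : ℝ)

/-- The dot action of `Wtf` on integral weights. -/
def dotZ {n f : ℕ} (p : ℕ) (a : Wtf n f) (lam : Xf n f) : Xf n f :=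
  fun j i =>
    (lam j ((a.w j)⁻¹ i) + eta0 n ((a.w j)⁻¹ i) + (p : ℤ) * a.t j ((a.w j)⁻¹ i)) - eta0 n i

/-- `⟨x_j + η₀, α_{ik}^∨⟩` for a real point `x`. -/
def prR {n f : ℕ} (x : RPt n f) (j : Fin f) (i k : Fin n) : ℝ :=
  (x j i + ((eta0 n i : ℤ) : ℝ)) - (x j k + ((eta0 n k : ℤ) : ℝ))

/-- `⟨λ_j + η₀, α_{ik}^∨⟩` for a weight `λ`. -/
def prZ {n f : ℕ} (lam : Xf n f) (j : Fin f) (i k : Fin n) : ℤ :=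
  (lam j i + eta0 n i) - (lam j k + eta0 n k)

/-- A point is (p-)regular if it lies on none of the affine hyperplanes
`⟨x_j + η₀, α^∨⟩ = pm`. -/
def regular {n f : ℕ} (p : ℕ) (x : RPt n f) : Prop :=
  ∀ (j : Fin f) (i k : Fin n) (m : ℤ), i < k → prR x j i k ≠ (p : ℝ) * (m : ℝ)

/-- Two regular points lie in the same p-alcove (same side of every hyperplane). -/
def sameAlcove {n f : ℕ} (p : ℕ) (x y : RPt n f) : Prop :=
  regular p x ∧ regular p y ∧
    ∀ (j : Fin f) (i k : Fin n) (m : ℤ), i < k →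
      (prR x j i k < (p : ℝ) * (m : ℝ) ↔ prR y j i k < (p : ℝ) * (m : ℝ))

/-- The root `α_{ik} = e_i - e_k` as a real vector. -/
def rootR {n : ℕ} (i k i' : Fin n) : ℝ :=
  (if i' = i then (1 : ℝ) else 0) - (if i' = k then (1 : ℝ) else 0)

/-- The affine reflection across the hyperplane `⟨x_j + η₀, α_{ik}^∨⟩ = pm`:
it replaces `x_j` by `x_j − (⟨x_j + η₀, α_{ik}^∨⟩ − pm) α_{ik}`. -/
def reflPt {n f : ℕ} (p : ℕ) (j : Fin f) (i k : Fin n) (m : ℤ) (x : RPt n f) : RPt n f :=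
  fun j' i' =>
    if j' = j then x j' i' - (prR x j i k - (p : ℝ) * (m : ℝ)) * rootR i k i' else x j' i'

/-- The origin, a point of the base alcove `C₀` (when `p > n`). -/
def basePt (n f : ℕ) : RPt n f := fun _ _ => 0

/-- The hyperplane indexed by `(j, i, k, m)` separates `x` from `y`. -/
def separates {n f : ℕ} (p : ℕ) (x y : RPt n f) (j : Fin f) (i k : Fin n) (m : ℤ) : Prop :=
  (prR x j i k < (p : ℝ) * (m : ℝ) ∧ (p : ℝ) * (m : ℝ) < prR y j i k) ∨
  (prR y j i k < (p : ℝ) * (m : ℝ) ∧ (p : ℝ) * (m : ℝ) < prR x j i k)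

/-- The length of `a ∈ Wtf` measured from the alcove of the base point `x`:
the number of hyperplanes separating the alcove of `x` from its image under `a`. -/
def lenFrom {n f : ℕ} (p : ℕ) (x : RPt n f) (a : Wtf n f) : ℕ :=
  Set.ncard {q : Fin f × Fin n × Fin n × ℤ |
    q.2.1 < q.2.2.1 ∧ separates p x (dotR p a x) q.1 q.2.1 q.2.2.1 q.2.2.2}

/-- Length relative to the dominant base alcove `C₀`. -/
def len {n f : ℕ} (p : ℕ) (a : Wtf n f) : ℕ := lenFrom p (basePt n f) a

/-- A point of the antidominant base alcove `w₀ · C₀`. -/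
def antiBasePt (n f p : ℕ) : RPt n f := dotR p (w0Elt n f) (basePt n f)

/-- Length relative to the antidominant base alcove `w₀ · C₀`. -/
def lenV {n f : ℕ} (p : ℕ) (a : Wtf n f) : ℕ := lenFrom p (antiBasePt n f p) a

/-- The affine Weyl group `Waf = (Λ_R ⋊ W)^f ⊆ Wtf`. -/
def Waf (n f : ℕ) : Set (Wtf n f) := {a | ∀ j, (∑ i, a.t j i) = 0}

/-- The stabilizer `Ωf` of the dominant base alcove `C₀`. -/
def Omegaf (n f p : ℕ) : Set (Wtf n f) :=
  {a | sameAlcove p (basePt n f) (dotR p a (basePt n f))}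

/-- The stabilizer of the antidominant base alcove `w₀ · C₀`. -/
def OmegaV (n f p : ℕ) : Set (Wtf n f) :=
  {a | sameAlcove p (antiBasePt n f p) (dotR p a (antiBasePt n f p))}

/-- `a ∈ Wtf` acts via the dot action as the affine reflection in a single hyperplane. -/
def isRefl {n f : ℕ} (p : ℕ) (a : Wtf n f) : Prop :=
  ∃ (j : Fin f) (i k : Fin n) (m : ℤ), i < k ∧ ∀ x, dotR p a x = reflPt p j i k m x

/-- One step of the Bruhat order (relative to the base point `x`):
`u < r u` for `r` a reflection with `ℓ(u) < ℓ(r u)`. -/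
def bruhatStepFrom {n f : ℕ} (p : ℕ) (x : RPt n f) (u v : Wtf n f) : Prop :=
  ∃ r, isRefl p r ∧ v = Wtf.mul r u ∧ lenFrom p x u < lenFrom p x v

/-- The Bruhat order on `Wtf` relative to the base alcove with representative
point `x` and stabilizer `Ω`: on `Waf` it is generated by the reflection steps,
and is extended to `Wtf` by `u ω ≤ v ω` for `u ≤ v` in `Waf`, `ω ∈ Ω`. -/
def bruhatLEFrom {n f : ℕ} (p : ℕ) (x : RPt n f) (Om : Set (Wtf n f)) (a b : Wtf n f) : Prop :=
  ∃ u v ω, u ∈ Waf n f ∧ v ∈ Waf n f ∧ ω ∈ Om ∧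
    a = Wtf.mul u ω ∧ b = Wtf.mul v ω ∧
    Relation.ReflTransGen (bruhatStepFrom p x) u v

/-- The Bruhat order on `Wtf` relative to the dominant base alcove. -/
def bruhatLE {n f : ℕ} (p : ℕ) (a b : Wtf n f) : Prop :=
  bruhatLEFrom p (basePt n f) (Omegaf n f p) a b

/-- The Bruhat order on `Wtf` relative to the antidominant base alcove. -/
def bruhatLEV {n f : ℕ} (p : ℕ) (a b : Wtf n f) : Prop :=
  bruhatLEFrom p (antiBasePt n f p) (OmegaV n f p) a b

/-- The admissible set `Adm(λ) = {w̃ : w̃ ≤ t_{σ(λ)} for some σ ∈ Wf}` (dominant order). -/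
def Adm {n f : ℕ} (p : ℕ) (lam : Xf n f) : Set (Wtf n f) :=
  {a | ∃ σ : WfG n f, bruhatLE p a (transl (fun j => permAct (σ j) (lam j)))}

/-- The admissible set `Adm∨(λ)` (antidominant order). -/
def AdmV {n f : ℕ} (p : ℕ) (lam : Xf n f) : Set (Wtf n f) :=
  {a | ∃ σ : WfG n f, bruhatLEV p a (transl (fun j => permAct (σ j) (lam j)))}

/-- The anti-automorphism `w̃ = w t_ν ↦ w̃* = t_{ν*} w*` of `Wtf`, where
`(w*)_j = (w_{f-1-j})⁻¹` and `(ν*)_j = ν_{f-1-j}`. -/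
def wstar {n f : ℕ} (a : Wtf n f) : Wtf n f :=
  ⟨fun j => (a.w (Fin.rev j))⁻¹, fun j => permAct (a.w (Fin.rev j)) (a.t (Fin.rev j))⟩

/-- `ν ↦ ν*` on weights: `(ν*)_j = ν_{f-1-j}`. -/
def xstar {n f : ℕ} (lam : Xf n f) : Xf n f := fun j => lam (Fin.rev j)

/-- The cyclic shift `π` on weights: `(πν)_j = ν_{j-1}`. -/
def sh {n f : ℕ} (ν : Xf n f) : Xf n f := fun j => ν ((finRotate f)⁻¹ j)

/-- The cyclic shift `π` on `Wf`: `(πσ)_j = σ_{j-1}`. -/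
def shW {n f : ℕ} (σ : WfG n f) : WfG n f := fun j => σ ((finRotate f)⁻¹ j)

/-- The `Wf`-part of `^(ν,σ)(w, μ)`, namely `σ w π(σ)⁻¹`. -/
def conjW {n f : ℕ} (σ w : WfG n f) : WfG n f := fun j => σ j * w j * (shW σ j)⁻¹

/-- The `Xf`-part of `^(ν,σ)(w, μ)`, namely `σ(μ) + pν − σwπ(σ)⁻¹ π(ν)`. -/
def conjX {n f : ℕ} (p : ℕ) (ν : Xf n f) (σ w : WfG n f) (μ : Xf n f) : Xf n f :=
  fun j i => permAct (σ j) (μ j) i + (p : ℤ) * ν j i - permAct (conjW σ w j) (sh ν j) i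

/-- `(w, μ) ∼ (w', μ')`: `(w', μ') = ^(ν,σ)(w, μ)` for some `(ν, σ)`. -/
def pairEquiv {n f : ℕ} (p : ℕ) (w : WfG n f) (μ : Xf n f) (w' : WfG n f) (μ' : Xf n f) : Prop :=
  ∃ (ν : Xf n f) (σ : WfG n f), w' = conjW σ w ∧ μ' = conjX p ν σ w μ

/-- `λ` is m-deep in the base alcove `C₀`:
`m < ⟨λ_j + η₀, α^∨⟩ < p − m` for all `j` and positive coroots `α^∨`. -/
def deep {n f : ℕ} (p m : ℕ) (lam : Xf n f) : Prop :=
  ∀ (j : Fin f) (i k : Fin n), i < k →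
    (m : ℤ) < prZ lam j i k ∧ prZ lam j i k < (p : ℤ) - (m : ℤ)

/-- `λ` lies m-deep in its own p-alcove. -/
def deepInAlcove {n f : ℕ} (p m : ℕ) (lam : Xf n f) : Prop :=
  ∀ (j : Fin f) (i k : Fin n), i < k →
    ∃ N : ℤ, (p : ℤ) * N + (m : ℤ) < prZ lam j i k ∧
      prZ lam j i k < (p : ℤ) * (N + 1) - (m : ℤ)

/-- The p-restricted weights `X₁`. -/
def X1 (n f p : ℕ) : Set (Xf n f) :=
  {lam | ∀ (j : Fin f) (i : Fin n) (h : (i : ℕ) + 1 < n),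
    0 ≤ lam j i - lam j ⟨(i : ℕ) + 1, h⟩ ∧ lam j i - lam j ⟨(i : ℕ) + 1, h⟩ ≤ (p : ℤ) - 1}

/-- `X⁰`: weights pairing to 0 with every coroot. -/
def X0 (n f : ℕ) : Set (Xf n f) := {lam | ∀ (j : Fin f) (i k : Fin n), lam j i = lam j k}

/-- The alcove of the regular point `x` is dominant. -/
def dominantPt {n f : ℕ} (x : RPt n f) : Prop :=
  ∀ (j : Fin f) (i k : Fin n), i < k → 0 < prR x j i k

/-- The alcove of the regular point `x` is p-restricted. -/
def restrictedPt {n f : ℕ} (p : ℕ) (x : RPt n f) : Prop :=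
  ∀ (j : Fin f) (i : Fin n) (h : (i : ℕ) + 1 < n),
    0 < prR x j i ⟨(i : ℕ) + 1, h⟩ ∧ prR x j i ⟨(i : ℕ) + 1, h⟩ < (p : ℝ)

/-- `Wtf⁺`: the elements sending `C₀` to a dominant alcove under the dot action. -/
def WtfPlus (n f p : ℕ) : Set (Wtf n f) := {a | dominantPt (dotR p a (basePt n f))}

/-- One step of the up (↑) order on alcoves, via representative points:
stay in the same alcove, or apply a reflection across a hyperplane lying above. -/
def upStep {n f : ℕ} (p : ℕ) (x y : RPt n f) : Prop :=
  sameAlcove p x y ∨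
    ∃ (j : Fin f) (i k : Fin n) (m : ℤ), i < k ∧ prR x j i k < (p : ℝ) * (m : ℝ) ∧
      y = reflPt p j i k m x

/-- The up (↑) order on p-alcoves, via representative points. -/
def alcoveLE {n f : ℕ} (p : ℕ) (x y : RPt n f) : Prop :=
  Relation.ReflTransGen (upStep p) x y

/-- `w̃₁ ↑ w̃₂` on `Wtf`: `w̃₁ · C₀ ↑ w̃₂ · C₀` and `w̃₁, w̃₂` in the same right
`Waf`-coset. -/
def upOrd {n f : ℕ} (p : ℕ) (a b : Wtf n f) : Prop :=
  alcoveLE p (dotR p a (basePt n f)) (dotR p b (basePt n f)) ∧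
    Wtf.mul a (Wtf.inv b) ∈ Waf n f

/-- Realification of an integral weight. -/
def toR {n f : ℕ} (lam : Xf n f) : RPt n f := fun j i => ((lam j i : ℤ) : ℝ)

/-- The `Wf`-orbit of a point of `(ℝ^n)^f`. -/
def orbitR {n f : ℕ} (y : RPt n f) : Set (RPt n f) :=
  Set.range fun σ : WfG n f => fun j => permAct (σ j) (y j)

end LLLSerre

namespace LLLSerre

/-! ### Auxiliary development -/

section Aux

variable {n f : ℕ}

lemma Wtf.ext' {a b : Wtf n f} (hw : a.w = b.w) (ht : a.t = b.t) : a = b := by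
  cases a; cases b; cases hw; cases ht; rfl

private lemma wtf_assoc (a b c : Wtf n f) :
    Wtf.mul (Wtf.mul a b) c = Wtf.mul a (Wtf.mul b c) := by
  refine Wtf.ext' ?_ ?_
  · funext j; simp [Wtf.mul, mul_assoc]
  · funext j i; simp [Wtf.mul, permAct]; ring

private lemma wtf_one_mul (a : Wtf n f) :
    Wtf.mul ⟨fun _ => 1, fun _ => 0⟩ a = a := by
  refine Wtf.ext' ?_ ?_
  · funext j; simp [Wtf.mul]
  · funext j i; simp [Wtf.mul, permAct]

private lemma wtf_mul_one (a : Wtf n f) :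
    Wtf.mul a ⟨fun _ => 1, fun _ => 0⟩ = a := by
  refine Wtf.ext' ?_ ?_
  · funext j; simp [Wtf.mul]
  · funext j i; simp [Wtf.mul, permAct]

private lemma wtf_inv_mul (a : Wtf n f) :
    Wtf.mul (Wtf.inv a) a = ⟨fun _ => 1, fun _ => 0⟩ := by
  refine Wtf.ext' ?_ ?_
  · funext j; simp [Wtf.mul, Wtf.inv]
  · funext j i; simp [Wtf.mul, Wtf.inv, permAct]

instance : Group (Wtf n f) where
  mul := Wtf.mul
  one := ⟨fun _ => 1, fun _ => 0⟩
  inv := Wtf.inv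
  mul_assoc := wtf_assoc
  one_mul := wtf_one_mul
  mul_one := wtf_mul_one
  inv_mul_cancel := wtf_inv_mul

lemma Wtf.mul_def (a b : Wtf n f) : Wtf.mul a b = a * b := rfl
lemma Wtf.inv_def (a : Wtf n f) : Wtf.inv a = a⁻¹ := rfl

@[simp] lemma Wtf.mul_w (a b : Wtf n f) (j : Fin f) : (a * b).w j = a.w j * b.w j := rfl
@[simp] lemma Wtf.mul_t (a b : Wtf n f) (j : Fin f) :
    (a * b).t j = b.t j + permAct (b.w j)⁻¹ (a.t j) := rfl
@[simp] lemma Wtf.inv_w (a : Wtf n f) (j : Fin f) : (a⁻¹).w j = (a.w j)⁻¹ := rfl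
@[simp] lemma Wtf.inv_t (a : Wtf n f) (j : Fin f) :
    (a⁻¹).t j = -(permAct (a.w j) (a.t j)) := rfl
@[simp] lemma Wtf.one_w (j : Fin f) : (1 : Wtf n f).w j = 1 := rfl
@[simp] lemma Wtf.one_t (j : Fin f) : (1 : Wtf n f).t j = 0 := rfl

lemma dotR_mul (p : ℕ) (a b : Wtf n f) (x : RPt n f) :
    dotR p (a * b) x = dotR p a (dotR p b x) := by
  funext j i
  simp [dotR, permAct]
  ring

@[simp] lemma dotR_one (p : ℕ) (x : RPt n f) : dotR p (1 : Wtf n f) x = x := by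
  funext j i
  simp [dotR, permAct]

end Aux

section Aux2

variable {n f : ℕ}

lemma prR_neg (x : RPt n f) (j : Fin f) (i k : Fin n) : prR x j i k = - prR x j k i := by
  simp only [prR]; ring

lemma prR_dotR (p : ℕ) (a : Wtf n f) (x : RPt n f) (j : Fin f) (i k : Fin n) :
    prR (dotR p a x) j i k
      = prR x j ((a.w j)⁻¹ i) ((a.w j)⁻¹ k)
        + (p : ℝ) * (((a.t j ((a.w j)⁻¹ i) - a.t j ((a.w j)⁻¹ k) : ℤ) : ℝ)) := by
  simp [prR, dotR]
  ring

lemma eta0_inj : Function.Injective (eta0 n) := by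
  intro i k h
  have h2 : (i : ℤ) = k := by simp [eta0] at h; omega
  exact Fin.ext (by exact_mod_cast h2)

lemma regular' {p : ℕ} {x : RPt n f} (hx : regular p x) :
    ∀ (j : Fin f) (i k : Fin n) (m : ℤ), i ≠ k → prR x j i k ≠ (p : ℝ) * (m : ℝ) := by
  intro j i k m hik
  rcases lt_or_gt_of_ne hik with h | h
  · exact hx j i k m h
  · intro hEq
    apply hx j k i (-m) h
    rw [prR_neg] at hEq
    push_cast
    linarith

lemma regular_basePt {p : ℕ} (hn2 : 2 ≤ n) (hnp : n < p) : regular p (basePt n f) := by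
  intro j i k m hik hEq
  have hp' : (0:ℤ) < (p:ℤ) := by exact_mod_cast (by omega : 0 < p)
  have hcast : ((eta0 n i - eta0 n k : ℤ) : ℝ) = (((p : ℤ) * m : ℤ) : ℝ) := by
    push_cast
    simp only [basePt, prR] at hEq
    linarith
  have h2 : (eta0 n i - eta0 n k : ℤ) = (p : ℤ) * m := by exact_mod_cast hcast
  have hb2 : eta0 n i ≤ (n : ℤ) - 1 := by simp only [eta0]; omega
  have hb3 : 0 ≤ eta0 n k := by simp only [eta0]; omega
  have hb1 : 0 ≤ eta0 n i := by simp only [eta0]; omega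
  have hb4 : eta0 n k ≤ (n : ℤ) - 1 := by simp only [eta0]; omega
  have hnp' : (n : ℤ) < (p : ℤ) := by exact_mod_cast hnp
  have hlt1 : m < 1 := lt_of_mul_lt_mul_left
    (by linarith : (p:ℤ) * m < (p:ℤ) * 1) (le_of_lt hp')
  have hlt2 : -1 < m := lt_of_mul_lt_mul_left
    (by linarith : (p:ℤ) * (-1) < (p:ℤ) * m) (le_of_lt hp')
  have hm : m = 0 := by omega
  rw [hm, mul_zero, sub_eq_zero] at h2
  exact (Fin.lt_iff_val_lt_val.mp hik).ne (congrArg Fin.val (eta0_inj h2))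

lemma regular_dotR {p : ℕ} (a : Wtf n f) {x : RPt n f} (hx : regular p x) :
    regular p (dotR p a x) := by
  intro j i k m hik hEq
  rw [prR_dotR] at hEq
  set i' := (a.w j)⁻¹ i with hi'
  set k' := (a.w j)⁻¹ k with hk'
  have hne : i' ≠ k' := fun h => hik.ne ((a.w j)⁻¹.injective h)
  refine regular' hx j i' k' (m - (a.t j i' - a.t j k')) hne ?_
  push_cast at hEq ⊢
  linarith

/-- consecutive pairing, as a function of a natural index -/
noncomputable def cprR (x : RPt n f) (j : Fin f) (l : ℕ) : ℝ :=
  if h : l + 1 < n then prR x j ⟨l, by omega⟩ ⟨l + 1, h⟩ else 0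

lemma prR_split (x : RPt n f) (j : Fin f) (i l k : Fin n) :
    prR x j i k = prR x j i l + prR x j l k := by
  simp only [prR]; ring

lemma prR_eq_sum_cprR (x : RPt n f) (j : Fin f) :
    ∀ (d : ℕ) (i k : Fin n), (k : ℕ) = (i : ℕ) + d →
      prR x j i k = ∑ l ∈ Finset.Ico (i : ℕ) (k : ℕ), cprR x j l := by
  intro d
  induction d with
  | zero =>
      intro i k hk
      have hik : i = k := Fin.ext (by omega)
      subst hik
      rw [Finset.Ico_self, Finset.sum_empty]
      simp [prR]
  | succ d ih =>
      intro i k hk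
      have hdn : (i : ℕ) + d < n := by omega
      have hlt : (i : ℕ) + d + 1 < n := by omega
      set k' : Fin n := ⟨(i : ℕ) + d, hdn⟩ with hk'def
      have h1 : prR x j i k' = ∑ l ∈ Finset.Ico (i : ℕ) ((i : ℕ) + d), cprR x j l := by
        rw [ih i k' rfl]
      have ekk : k = ⟨(i : ℕ) + d + 1, hlt⟩ := by apply Fin.ext; simp only [Fin.val_mk]; omega
      have h2 : prR x j k' k = cprR x j ((i : ℕ) + d) := by
        rw [ekk]
        simp only [cprR, dif_pos hlt]
        rfl
      have hkval : (k : ℕ) = (i : ℕ) + d + 1 := by omega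
      rw [prR_split x j i k' k, h1, h2, hkval,
        Finset.sum_Ico_succ_top (by omega : (i:ℕ) ≤ (i:ℕ) + d)]

/-- translation-part sums -/
def St (a : Wtf n f) (j : Fin f) : ℤ := ∑ i, a.t j i

lemma sum_permAct (σ : Equiv.Perm (Fin n)) (x : Fin n → ℤ) :
    ∑ i, permAct σ x i = ∑ i, x i := by
  simp only [permAct]
  exact Equiv.sum_comp σ⁻¹ x

lemma St_mul (a b : Wtf n f) (j : Fin f) : St (a * b) j = St a j + St b j := by
  simp only [St, Wtf.mul_t, Pi.add_apply, Finset.sum_add_distrib, sum_permAct]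
  ring

lemma St_inv (a : Wtf n f) (j : Fin f) : St a⁻¹ j = - St a j := by
  simp only [St, Wtf.inv_t, Pi.neg_apply, Finset.sum_neg_distrib, sum_permAct]

lemma mem_Waf_iff (a : Wtf n f) : a ∈ Waf n f ↔ ∀ j, St a j = 0 := Iff.rfl

end Aux2

section Aux3

variable {n f : ℕ} {p : ℕ}

/-! #### addRoot: adding a multiple of a root at one slot -/

def addRoot (c : ℝ) (j : Fin f) (i k : Fin n) (x : RPt n f) : RPt n f :=
  fun j' i' => if j' = j then x j' i' + c * rootR i k i' else x j' i'

lemma reflPt_eq_addRoot (p : ℕ) (j : Fin f) (i k : Fin n) (m : ℤ) (x : RPt n f) :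
    reflPt p j i k m x = addRoot ((p : ℝ) * (m : ℝ) - prR x j i k) j i k x := by
  funext j' i'
  simp only [reflPt, addRoot]
  split <;> ring

lemma addRoot_zero (j : Fin f) (i k : Fin n) (x : RPt n f) :
    addRoot 0 j i k x = x := by
  funext j' i'
  simp [addRoot]

lemma addRoot_addRoot (c1 c2 : ℝ) (j : Fin f) (i k : Fin n) (x : RPt n f) :
    addRoot c2 j i k (addRoot c1 j i k x) = addRoot (c1 + c2) j i k x := by
  funext j' i'
  simp only [addRoot]
  split <;> ring

lemma rootR_left {i k : Fin n} (hik : i ≠ k) : rootR i k i = 1 := by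
  simp [rootR, hik]

lemma rootR_right {i k : Fin n} (hik : i ≠ k) : rootR i k k = -1 := by
  simp [rootR, hik.symm]

lemma prR_addRoot (c : ℝ) (j : Fin f) (i k : Fin n) (x : RPt n f) (a b : Fin n) :
    prR (addRoot c j i k x) j a b = prR x j a b + c * (rootR i k a - rootR i k b) := by
  simp only [prR, addRoot, if_pos rfl, if_true, eq_self_iff_true]
  ring

lemma prR_addRoot_self (c : ℝ) (j : Fin f) {i k : Fin n} (hik : i ≠ k) (x : RPt n f) :
    prR (addRoot c j i k x) j i k = prR x j i k + 2 * c := by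
  rw [prR_addRoot, rootR_left hik, rootR_right hik]
  ring

lemma prR_addRoot_offslot (c : ℝ) {j j' : Fin f} (h : j' ≠ j) (i k : Fin n) (x : RPt n f)
    (a b : Fin n) : prR (addRoot c j i k x) j' a b = prR x j' a b := by
  simp [prR, addRoot, h]

lemma upStep_addRoot {j : Fin f} {i k : Fin n} (hik : i < k) {m : ℤ} {x : RPt n f}
    (hlt : prR x j i k < (p : ℝ) * (m : ℝ)) :
    upStep p x (addRoot ((p : ℝ) * (m : ℝ) - prR x j i k) j i k x) :=
  Or.inr ⟨j, i, k, m, hik, hlt, (reflPt_eq_addRoot p j i k m x).symm⟩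

/-- two upward reflections in the same direction produce the translation by `p δ α_{ik}` -/
lemma pairUp (hp : 0 < p) (j : Fin f) {i k : Fin n} (hik : i < k) {δ : ℤ} (hδ : 1 ≤ δ)
    (x : RPt n f) (hreg : ∀ m : ℤ, prR x j i k ≠ (p : ℝ) * (m : ℝ)) :
    alcoveLE p x (addRoot ((p : ℝ) * (δ : ℝ)) j i k x) := by
  have hp' : (0 : ℝ) < (p : ℝ) := by exact_mod_cast hp
  set d := prR x j i k with hd
  set m1 : ℤ := ⌊d / (p : ℝ)⌋ + 1 with hm1
  have hm1c : ((m1 : ℤ) : ℝ) = ((⌊d / (p : ℝ)⌋ : ℤ) : ℝ) + 1 := by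
    rw [hm1]; push_cast; ring
  have h1 : d < (p : ℝ) * (m1 : ℝ) := by
    have h := Int.lt_floor_add_one (d / (p : ℝ))
    rw [div_lt_iff₀ hp'] at h
    rw [hm1c, mul_comm]
    exact h
  have hfloor : (p : ℝ) * ((⌊d / (p : ℝ)⌋ : ℤ) : ℝ) < d := by
    have h0 := Int.floor_le (d / (p : ℝ))
    have h0' : ((⌊d / (p : ℝ)⌋ : ℤ) : ℝ) * (p : ℝ) ≤ d := by
      rw [← le_div_iff₀ hp']
      exact h0
    rcases lt_or_eq_of_le h0' with h | h
    · linarith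
    · exact absurd (by linarith : d = (p : ℝ) * ((⌊d / (p : ℝ)⌋ : ℤ) : ℝ)) (hreg ⌊d / (p : ℝ)⌋)
  have h2 : (p : ℝ) * (m1 : ℝ) < d + (p : ℝ) * (δ : ℝ) := by
    rw [hm1c]
    have hδ' : (1 : ℝ) ≤ (δ : ℝ) := by exact_mod_cast hδ
    nlinarith
  -- first step
  set c1 : ℝ := (p : ℝ) * (m1 : ℝ) - d with hc1
  set x1 := addRoot c1 j i k x with hx1
  have step1 : upStep p x x1 := upStep_addRoot hik h1
  -- second step
  set m2 : ℤ := m1 + δ with hm2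
  have hx1prR : prR x1 j i k = d + 2 * c1 := prR_addRoot_self c1 j hik.ne x
  have hcond2 : prR x1 j i k < (p : ℝ) * (m2 : ℝ) := by
    rw [hx1prR]
    have : ((m2 : ℤ) : ℝ) = (m1 : ℝ) + (δ : ℝ) := by rw [hm2]; push_cast; ring
    rw [this]
    rw [hc1]
    ring_nf
    ring_nf at h2
    linarith
  have step2 : upStep p x1 (addRoot ((p : ℝ) * (m2 : ℝ) - prR x1 j i k) j i k x1) :=
    upStep_addRoot hik hcond2
  have efinal : addRoot ((p : ℝ) * (m2 : ℝ) - prR x1 j i k) j i k x1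
      = addRoot ((p : ℝ) * (δ : ℝ)) j i k x := by
    rw [hx1prR, hx1, addRoot_addRoot]
    congr 1
    have : ((m2 : ℤ) : ℝ) = (m1 : ℝ) + (δ : ℝ) := by rw [hm2]; push_cast; ring
    rw [this, hc1]
    ring
  rw [← efinal]
  exact Relation.ReflTransGen.head step1 (Relation.ReflTransGen.head step2 .refl)

/-! #### translation invariance of the up-order -/

def shiftP (p : ℕ) (γ : Xf n f) (x : RPt n f) : RPt n f :=
  fun j i => x j i + (p : ℝ) * ((γ j i : ℤ) : ℝ)

lemma prR_shiftP (γ : Xf n f) (x : RPt n f) (j : Fin f) (i k : Fin n) :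
    prR (shiftP p γ x) j i k = prR x j i k + (p : ℝ) * ((γ j i - γ j k : ℤ) : ℝ) := by
  simp only [prR, shiftP]
  push_cast
  ring

lemma regular_shiftP {γ : Xf n f} {x : RPt n f} (hx : regular p x) :
    regular p (shiftP p γ x) := by
  intro j i k m hik hEq
  rw [prR_shiftP] at hEq
  refine regular' hx j i k (m - (γ j i - γ j k)) hik.ne ?_
  push_cast at hEq ⊢
  linarith

lemma upStep_shiftP (γ : Xf n f) {x y : RPt n f} (h : upStep p x y) :
    upStep p (shiftP p γ x) (shiftP p γ y) := by
  rcases h with ⟨hx, hy, hiff⟩ | ⟨j, i, k, m, hik, hlt, rfl⟩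
  · refine Or.inl ⟨regular_shiftP hx, regular_shiftP hy, ?_⟩
    intro j i k m hik
    have key : ∀ z : RPt n f, (prR (shiftP p γ z) j i k < (p : ℝ) * (m : ℝ) ↔
        prR z j i k < (p : ℝ) * (((m - (γ j i - γ j k) : ℤ)) : ℝ)) := by
      intro z
      rw [prR_shiftP]
      constructor <;> intro hh <;> push_cast at hh ⊢ <;> linarith
    rw [key x, key y]
    exact hiff j i k _ hik
  · refine Or.inr ⟨j, i, k, m + (γ j i - γ j k), hik, ?_, ?_⟩
    · rw [prR_shiftP]
      push_cast
      push_cast at hlt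
      linarith
    · rw [reflPt_eq_addRoot, reflPt_eq_addRoot]
      funext j' i'
      simp only [addRoot, shiftP, prR_shiftP]
      by_cases hj : j' = j
      · subst hj
        simp only [if_pos rfl]
        by_cases hi : i' = i
        · subst hi; push_cast; ring
        · by_cases hk : i' = k
          · subst hk; push_cast; ring
          · push_cast; ring
      · simp [hj]

lemma alcoveLE_shiftP (γ : Xf n f) {x y : RPt n f} (h : alcoveLE p x y) :
    alcoveLE p (shiftP p γ x) (shiftP p γ y) :=
  Relation.ReflTransGen.lift (shiftP p γ) (fun _ _ hh => upStep_shiftP γ hh) _ _ h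

/-! #### reversal of the up-order under elements with longest finite part -/

def IsW0 (gg : Wtf n f) : Prop := ∀ j, gg.w j = Fin.revPerm

lemma prR_dotR_w0 {gg : Wtf n f} (hgg : IsW0 gg) (z : RPt n f) (j : Fin f) (i k : Fin n) :
    prR (dotR p gg z) j i k
      = (p : ℝ) * ((gg.t j (Fin.rev i) - gg.t j (Fin.rev k) : ℤ) : ℝ)
        - prR z j (Fin.rev k) (Fin.rev i) := by
  rw [prR_dotR, hgg j]
  have hrev : (Fin.revPerm : Equiv.Perm (Fin n))⁻¹ = Fin.revPerm := by
    rw [Equiv.Perm.inv_def, Fin.revPerm_symm]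
  rw [hrev]
  have happ : ∀ a : Fin n, (Fin.revPerm : Equiv.Perm (Fin n)) a = Fin.rev a := fun _ => rfl
  rw [happ, happ, prR_neg]
  ring

lemma revPerm_inv_apply (a : Fin n) :
    ((Fin.revPerm : Equiv.Perm (Fin n))⁻¹) a = Fin.rev a := rfl

lemma revPerm_apply (a : Fin n) : (Fin.revPerm : Equiv.Perm (Fin n)) a = Fin.rev a := rfl

lemma dotR_addRoot {gg : Wtf n f} (hgg : IsW0 gg) (c : ℝ) (j : Fin f) (i k : Fin n)
    (x : RPt n f) :
    dotR p gg (addRoot c j i k x)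
      = addRoot (-c) j (Fin.rev k) (Fin.rev i) (dotR p gg x) := by
  funext j' i'
  simp only [dotR, addRoot, hgg j', revPerm_inv_apply]
  by_cases hj : j' = j
  · subst hj
    simp only [if_pos rfl, if_true, eq_self_iff_true]
    have hroot : rootR i k (Fin.rev i') = - rootR (Fin.rev k) (Fin.rev i) i' := by
      simp only [rootR, Fin.rev_eq_iff]
      ring
    rw [hroot]
    ring
  · simp [hj]

lemma upStep_rev {gg : Wtf n f} (hgg : IsW0 gg) {x y : RPt n f} (h : upStep p x y) :
    upStep p (dotR p gg y) (dotR p gg x) := by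
  rcases h with ⟨hx, hy, hiff⟩ | ⟨j, i, k, m, hik, hlt, rfl⟩
  · refine Or.inl ⟨regular_dotR gg hy, regular_dotR gg hx, ?_⟩
    intro j i k m hik
    have hrki : Fin.rev k < Fin.rev i := Fin.rev_lt_rev.mpr hik
    have key : ∀ z : RPt n f, regular p z →
        (prR (dotR p gg z) j i k < (p : ℝ) * (m : ℝ) ↔
          ¬ (prR z j (Fin.rev k) (Fin.rev i)
              < (p : ℝ) * (((gg.t j (Fin.rev i) - gg.t j (Fin.rev k) - m : ℤ)) : ℝ))) := by
      intro z hz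
      rw [prR_dotR_w0 hgg]
      constructor
      · intro hh hcon
        push_cast at hh hcon
        linarith
      · intro hh
        have hne := regular' hz j (Fin.rev k) (Fin.rev i)
          (gg.t j (Fin.rev i) - gg.t j (Fin.rev k) - m) hrki.ne
        have hgt : (p : ℝ) * (((gg.t j (Fin.rev i) - gg.t j (Fin.rev k) - m : ℤ)) : ℝ)
            < prR z j (Fin.rev k) (Fin.rev i) := by
          rcases lt_trichotomy (prR z j (Fin.rev k) (Fin.rev i))
            ((p : ℝ) * (((gg.t j (Fin.rev i) - gg.t j (Fin.rev k) - m : ℤ)) : ℝ)) with h1 | h1 | h1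
          · exact absurd h1 hh
          · exact absurd h1 hne
          · exact h1
        push_cast at hgt ⊢
        linarith
    rw [key y hy, key x hx]
    exact not_congr (hiff j (Fin.rev k) (Fin.rev i) _ hrki).symm
  · -- reflection case
    have hrki : Fin.rev k < Fin.rev i := Fin.rev_lt_rev.mpr hik
    have hy : prR (reflPt p j i k m x) j i k
        = 2 * ((p:ℝ) * (m:ℝ)) - prR x j i k := by
      rw [reflPt_eq_addRoot, prR_addRoot_self _ _ hik.ne]
      ring
    refine Or.inr ⟨j, Fin.rev k, Fin.rev i, gg.t j k - gg.t j i - m, hrki, ?_, ?_⟩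
    · rw [prR_dotR_w0 hgg, Fin.rev_rev, Fin.rev_rev, hy]
      push_cast
      nlinarith [hlt]
    · have e2 : dotR p gg (reflPt p j i k m x)
          = addRoot (-((p:ℝ)*(m:ℝ) - prR x j i k)) j (Fin.rev k) (Fin.rev i)
              (dotR p gg x) := by
        rw [reflPt_eq_addRoot, dotR_addRoot hgg]
      have e3 : prR (dotR p gg (reflPt p j i k m x)) j (Fin.rev k) (Fin.rev i)
          = prR (dotR p gg x) j (Fin.rev k) (Fin.rev i)
            + 2 * (-((p:ℝ)*(m:ℝ) - prR x j i k)) := by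
        rw [e2]
        exact prR_addRoot_self _ _ hrki.ne _
      have e4 : prR (dotR p gg x) j (Fin.rev k) (Fin.rev i)
          = (p : ℝ) * (((gg.t j k - gg.t j i : ℤ)) : ℝ) - prR x j i k := by
        rw [prR_dotR_w0 hgg, Fin.rev_rev, Fin.rev_rev]
      rw [reflPt_eq_addRoot, e3, e4, e2, addRoot_addRoot]
      conv_lhs => rw [← addRoot_zero j (Fin.rev k) (Fin.rev i) (dotR p gg x)]
      congr 1
      push_cast
      ring
lemma alcoveLE_rev {gg : Wtf n f} (hgg : IsW0 gg) {x y : RPt n f} (h : alcoveLE p x y) :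
    alcoveLE p (dotR p gg y) (dotR p gg x) := by
  induction h with
  | refl => exact .refl
  | tail hab hbc ih => exact Relation.ReflTransGen.head (upStep_rev hgg hbc) ih

end Aux3

section Aux4

variable {n f : ℕ} {p : ℕ}

lemma ofW_mul (σ τ : WfG n f) : ofW σ * ofW τ = ofW (fun j => σ j * τ j) := by
  refine Wtf.ext' rfl ?_
  funext j i
  show (ofW τ).t j i + permAct ((ofW τ).w j)⁻¹ ((ofW σ).t j) i = 0
  simp [ofW, permAct]

lemma ofW_one : ofW (fun _ => (1 : Equiv.Perm (Fin n))) = (1 : Wtf n f) := rfl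

lemma dotR_ofW (σ : WfG n f) (x : RPt n f) (j : Fin f) (i : Fin n) :
    dotR p (ofW σ) x j i
      = x j ((σ j)⁻¹ i) + ((eta0 n ((σ j)⁻¹ i) : ℤ) : ℝ) - ((eta0 n i : ℤ) : ℝ) := by
  simp [dotR, ofW]

lemma prR_dotR_ofW (σ : WfG n f) (x : RPt n f) (j : Fin f) (a b : Fin n) :
    prR (dotR p (ofW σ) x) j a b = prR x j ((σ j)⁻¹ a) ((σ j)⁻¹ b) := by
  rw [prR_dotR]
  norm_num [ofW]

def swapW (j : Fin f) (i k : Fin n) : WfG n f :=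
  fun j' => if j' = j then Equiv.swap i k else 1

lemma reflPt_zero_eq (j : Fin f) {i k : Fin n} (hik : i ≠ k) (x : RPt n f) :
    reflPt p j i k (0 : ℤ) x = dotR p (ofW (swapW j i k)) x := by
  funext j' i'
  by_cases hj : j' = j
  · subst hj
    rw [dotR_ofW]
    simp only [reflPt, swapW, if_pos rfl, if_true, eq_self_iff_true, Int.cast_zero, mul_zero]
    rw [Equiv.swap_inv]
    by_cases hi : i' = i
    · subst hi
      rw [Equiv.swap_apply_left, rootR_left hik]
      simp only [prR]
      ring
    · by_cases hk : i' = k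
      · subst hk
        rw [Equiv.swap_apply_right, rootR_right hik]
        simp only [prR]
        ring
      · rw [Equiv.swap_apply_of_ne_of_ne hi hk]
        simp only [rootR, if_neg hi, if_neg hk]
        ring
  · rw [dotR_ofW]
    simp only [reflPt, swapW, if_neg hj]
    simp [permAct]

lemma swap_adj_lt {l : ℕ} (hl : l + 1 < n) {a b : Fin n}
    (hab : a < b) (hne : ¬ ((a : ℕ) = l ∧ (b : ℕ) = l + 1)) :
    Equiv.swap (⟨l, by omega⟩ : Fin n) ⟨l + 1, hl⟩ a
      < Equiv.swap (⟨l, by omega⟩ : Fin n) ⟨l + 1, hl⟩ b := by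
  rw [Fin.lt_iff_val_lt_val]
  rw [Fin.lt_iff_val_lt_val] at hab
  simp only [Equiv.swap_apply_def]
  split_ifs with h1 h2 h3 h4 h5 h6 <;>
    simp_all [Fin.ext_iff] <;> omega

def swapF (j : Fin f) (i k : Fin n) : (Fin f × Fin n × Fin n) → (Fin f × Fin n × Fin n) :=
  fun q => if q.1 = j then (q.1, Equiv.swap i k q.2.1, Equiv.swap i k q.2.2) else q

lemma swapF_invol (j : Fin f) (i k : Fin n) (q : Fin f × Fin n × Fin n) :
    swapF j i k (swapF j i k q) = q := by
  obtain ⟨j', a, b⟩ := q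
  by_cases hj : j' = j <;> simp [swapF, hj, Equiv.swap_apply_self]

lemma swapF_slot (j : Fin f) (i k : Fin n) (a b : Fin n) :
    swapF j i k (j, a, b) = (j, Equiv.swap i k a, Equiv.swap i k b) := by simp [swapF]

lemma swapF_off {j j' : Fin f} (hj : j' ≠ j) (i k : Fin n) (a b : Fin n) :
    swapF j i k (j', a, b) = (j', a, b) := by simp [swapF, hj]

open Classical in
/-- generic inversion-counting: swapping out an adjacent inversion strictly reduces count -/
lemma card_filter_swap_lt {l : ℕ} (hl : l + 1 < n) (j : Fin f)
    (P P' : Fin f → Fin n → Fin n → Prop)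
    (hswap : ∀ a b, P' j a b ↔ P j (Equiv.swap ⟨l, by omega⟩ ⟨l + 1, hl⟩ a)
      (Equiv.swap ⟨l, by omega⟩ ⟨l + 1, hl⟩ b))
    (hoff : ∀ j' a b, j' ≠ j → (P' j' a b ↔ P j' a b))
    (hanti : ∀ j' a b, P j' a b → ¬ P j' b a)
    (hP0 : P j ⟨l, by omega⟩ ⟨l + 1, hl⟩) :
    (Finset.univ.filter fun q : Fin f × Fin n × Fin n =>
        q.2.1 < q.2.2 ∧ P' q.1 q.2.1 q.2.2).card
      < (Finset.univ.filter fun q : Fin f × Fin n × Fin n =>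
        q.2.1 < q.2.2 ∧ P q.1 q.2.1 q.2.2).card := by
  have hln : l < n := by omega
  have hq0mem : ((j, ⟨l, hln⟩, ⟨l + 1, hl⟩) : Fin f × Fin n × Fin n)
      ∈ (Finset.univ.filter fun q : Fin f × Fin n × Fin n =>
        q.2.1 < q.2.2 ∧ P q.1 q.2.1 q.2.2) := by
    refine Finset.mem_filter.mpr ⟨Finset.mem_univ _, ?_, hP0⟩
    show (⟨l, hln⟩ : Fin n) < ⟨l + 1, hl⟩
    simp only [Fin.mk_lt_mk]
    omega
  have hsub : ∀ q ∈ (Finset.univ.filter fun q : Fin f × Fin n × Fin n =>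
      q.2.1 < q.2.2 ∧ P' q.1 q.2.1 q.2.2),
      swapF j ⟨l, hln⟩ ⟨l + 1, hl⟩ q
        ∈ ((Finset.univ.filter fun q : Fin f × Fin n × Fin n =>
          q.2.1 < q.2.2 ∧ P q.1 q.2.1 q.2.2).erase (j, ⟨l, hln⟩, ⟨l + 1, hl⟩)) := by
    rintro ⟨j', a, b⟩ hq
    obtain ⟨-, hab, hP'⟩ := Finset.mem_filter.mp hq
    rcases eq_or_ne j' j with rfl | hj
    · have hPab : P j' (Equiv.swap ⟨l, hln⟩ ⟨l + 1, hl⟩ a)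
          (Equiv.swap ⟨l, hln⟩ ⟨l + 1, hl⟩ b) := (hswap a b).mp hP'
      have hne : ¬ ((a : ℕ) = l ∧ (b : ℕ) = l + 1) := by
        rintro ⟨ha, hb⟩
        have ea : a = (⟨l, hln⟩ : Fin n) := Fin.ext ha
        have eb : b = (⟨l + 1, hl⟩ : Fin n) := Fin.ext hb
        rw [ea, eb, Equiv.swap_apply_left, Equiv.swap_apply_right] at hPab
        exact hanti _ _ _ hPab hP0
      rw [swapF_slot]
      refine Finset.mem_erase.mpr ⟨?_, Finset.mem_filter.mpr
        ⟨Finset.mem_univ _, swap_adj_lt hl hab hne, hPab⟩⟩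
      intro heq
      simp only [Prod.mk.injEq] at heq
      obtain ⟨-, h1, h2⟩ := heq
      have ea : a = (⟨l + 1, hl⟩ : Fin n) := by
        have := congrArg (Equiv.swap (⟨l, hln⟩ : Fin n) ⟨l + 1, hl⟩) h1
        rwa [Equiv.swap_apply_self, Equiv.swap_apply_left] at this
      have eb : b = (⟨l, hln⟩ : Fin n) := by
        have := congrArg (Equiv.swap (⟨l, hln⟩ : Fin n) ⟨l + 1, hl⟩) h2
        rwa [Equiv.swap_apply_self, Equiv.swap_apply_right] at this
      rw [ea, eb] at hab
      simp only [Fin.mk_lt_mk] at hab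
      omega
    · rw [swapF_off hj]
      refine Finset.mem_erase.mpr ⟨?_, Finset.mem_filter.mpr
        ⟨Finset.mem_univ _, hab, (hoff j' a b hj).mp hP'⟩⟩
      intro heq
      exact hj (congrArg Prod.fst heq)
  have hinj : Set.InjOn (swapF j (⟨l, hln⟩ : Fin n) ⟨l + 1, hl⟩)
      ((Finset.univ.filter fun q : Fin f × Fin n × Fin n =>
        q.2.1 < q.2.2 ∧ P' q.1 q.2.1 q.2.2) : Finset _) := by
    intro q1 _ q2 _ h
    rw [← swapF_invol j ⟨l, hln⟩ ⟨l + 1, hl⟩ q1, h, swapF_invol]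
  calc (Finset.univ.filter fun q : Fin f × Fin n × Fin n =>
        q.2.1 < q.2.2 ∧ P' q.1 q.2.1 q.2.2).card
      ≤ ((Finset.univ.filter fun q : Fin f × Fin n × Fin n =>
        q.2.1 < q.2.2 ∧ P q.1 q.2.1 q.2.2).erase (j, ⟨l, hln⟩, ⟨l + 1, hl⟩)).card :=
        Finset.card_le_card_of_injOn _ hsub hinj
    _ < _ := Finset.card_erase_lt_of_mem hq0mem

open Classical in
noncomputable def InvSet (x : RPt n f) : Finset (Fin f × Fin n × Fin n) :=
  Finset.univ.filter fun q => q.2.1 < q.2.2 ∧ prR x q.1 q.2.1 q.2.2 < 0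

lemma dominant_of_invSet_empty {x : RPt n f} (hx : regular p x)
    (h : (InvSet x).card = 0) : dominantPt x := by
  intro j i k hik
  have hne : prR x j i k ≠ 0 := by
    have := regular' hx j i k 0 hik.ne
    simpa using this
  rcases lt_trichotomy (prR x j i k) 0 with hlt | heq | hgt
  · exfalso
    have : (j, i, k) ∈ InvSet x := by
      refine Finset.mem_filter.mpr ⟨Finset.mem_univ _, hik, hlt⟩
    rw [Finset.card_eq_zero.mp h] at this
    exact absurd this (Finset.notMem_empty _)
  · exact absurd heq hne
  · exact hgt

lemma exists_adjacent_inv {x : RPt n f} {j : Fin f} {i k : Fin n}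
    (hik : i < k) (hneg : prR x j i k < 0) :
    ∃ l : ℕ, ∃ hl : l + 1 < n, prR x j ⟨l, by omega⟩ ⟨l + 1, hl⟩ < 0 := by
  have hik' : (i : ℕ) < (k : ℕ) := hik
  have hsum := prR_eq_sum_cprR x j ((k : ℕ) - (i : ℕ)) i k (by omega)
  have hlt0 : ∑ l ∈ Finset.Ico (i : ℕ) (k : ℕ), cprR x j l
      < ∑ l ∈ Finset.Ico (i : ℕ) (k : ℕ), (0 : ℝ) := by
    rw [Finset.sum_const_zero, ← hsum]
    exact hneg
  obtain ⟨l, hlmem, hlt⟩ := Finset.exists_lt_of_sum_lt hlt0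
  have hl2 : l + 1 < n := by
    have := Finset.mem_Ico.mp hlmem
    have hkn : (k : ℕ) < n := k.isLt
    omega
  refine ⟨l, hl2, ?_⟩
  simp only [cprR, dif_pos hl2] at hlt
  exact hlt

lemma sort_up_aux : ∀ (N : ℕ) (x : RPt n f), regular p x → (InvSet x).card ≤ N →
    ∃ σ : WfG n f, alcoveLE p x (dotR p (ofW σ) x) ∧ dominantPt (dotR p (ofW σ) x) := by
  intro N
  induction N with
  | zero =>
      intro x hx hcard
      refine ⟨fun _ => 1, ?_, ?_⟩
      · rw [ofW_one, dotR_one]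
        exact Relation.ReflTransGen.refl
      · rw [ofW_one, dotR_one]
        exact dominant_of_invSet_empty hx (by omega)
  | succ N ih =>
      intro x hx hcard
      rcases Nat.eq_zero_or_pos (InvSet x).card with h0 | h0
      · exact ih x hx (by omega)
      · obtain ⟨⟨j, i, k⟩, hq⟩ := Finset.card_pos.mp h0
        obtain ⟨-, hik, hneg⟩ := Finset.mem_filter.mp hq
        obtain ⟨l, hl, hadjneg⟩ := exists_adjacent_inv hik hneg
        set il : Fin n := ⟨l, by omega⟩ with hil
        set il1 : Fin n := ⟨l + 1, hl⟩ with hil1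
        have hilne : il ≠ il1 := by
          intro h; rw [Fin.ext_iff] at h; simp [hil, hil1] at h
        set τ := swapW j il il1 with hτ
        set x' := dotR p (ofW τ) x with hx'
        have hstep : upStep p x x' := by
          refine Or.inr ⟨j, il, il1, 0, ?_, ?_, ?_⟩
          · simp only [hil, hil1, Fin.mk_lt_mk]
            omega
          · simpa using hadjneg
          · rw [hx', hτ, reflPt_zero_eq j hilne x]
        have hreg' : regular p x' := regular_dotR _ hx
        have hswapinv : ((Equiv.swap il il1)⁻¹ : Equiv.Perm (Fin n)) = Equiv.swap il il1 :=
          Equiv.swap_inv il il1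
        have hprR' : ∀ a b, prR x' j a b = prR x j (Equiv.swap il il1 a) (Equiv.swap il il1 b) := by
          intro a b
          rw [hx', prR_dotR]
          simp only [ofW, hτ, swapW, if_pos rfl, if_true, eq_self_iff_true, hswapinv]
          norm_num
        have hprRoff : ∀ j' a b, j' ≠ j → prR x' j' a b = prR x j' a b := by
          intro j' a b hj'
          rw [hx', prR_dotR]
          simp only [ofW, hτ, swapW, if_neg hj']
          simp [permAct]
        have hcard' : (InvSet x').card < (InvSet x).card := by
          apply card_filter_swap_lt hl j
            (fun j' a b => prR x j' a b < 0) (fun j' a b => prR x' j' a b < 0)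
          · intro a b; rw [hprR' a b]
          · intro j' a b hj'; rw [hprRoff j' a b hj']
          · intro j' a b hP
            rw [prR_neg]
            linarith
          · exact hadjneg
        obtain ⟨σ', hσ'le, hσ'dom⟩ := ih x' hreg' (by omega)
        refine ⟨fun j' => σ' j' * τ j', ?_, ?_⟩
        · have : dotR p (ofW fun j' => σ' j' * τ j') x = dotR p (ofW σ') x' := by
            rw [hx', ← dotR_mul, ofW_mul]
          rw [this]
          exact Relation.ReflTransGen.head hstep hσ'le
        · have : dotR p (ofW fun j' => σ' j' * τ j') x = dotR p (ofW σ') x' := by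
            rw [hx', ← dotR_mul, ofW_mul]
          rw [this]
          exact hσ'dom

lemma sort_up {x : RPt n f} (hx : regular p x) :
    ∃ σ : WfG n f, alcoveLE p x (dotR p (ofW σ) x) ∧ dominantPt (dotR p (ofW σ) x) :=
  sort_up_aux (InvSet x).card x hx le_rfl

end Aux4

section Aux5

variable {n f : ℕ} {p : ℕ}

lemma dominant_rearrange_eq {z : RPt n f} (ρ : WfG n f)
    (hz : dominantPt z) (hz' : dominantPt (dotR p (ofW ρ) z)) :
    dotR p (ofW ρ) z = z := by
  funext j i
  set b : Fin n → ℝ := fun i' => z j i' + ((eta0 n i' : ℤ) : ℝ) with hb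
  have hzb : ∀ a c : Fin n, a < c → b c < b a := by
    intro a c h
    have := hz j a c h
    simp only [prR] at this
    simp only [hb]
    linarith
  have hsm1 : StrictMono (fun i' : Fin n => - b i') := by
    intro a c h
    simp only [neg_lt_neg_iff]
    exact hzb a c h
  have hsm2 : StrictMono ((fun i' : Fin n => - b i') ∘ ⇑((ρ j)⁻¹ : Equiv.Perm (Fin n))) := by
    intro a c h
    have hzc := hz' j a c h
    rw [prR_dotR_ofW] at hzc
    have : prR z j ((ρ j)⁻¹ a) ((ρ j)⁻¹ c) > 0 := hzc
    simp only [Function.comp, neg_lt_neg_iff]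
    simp only [prR] at this
    simp only [hb]
    linarith
  have hkey := Tuple.unique_monotone (f := fun i' : Fin n => - b i')
    (σ := (ρ j)⁻¹) (τ := 1) hsm2.monotone (by simpa using hsm1.monotone)
  have hbi : b (((ρ j)⁻¹ : Equiv.Perm (Fin n)) i) = b i := by
    have := congrFun hkey i
    simp only [Function.comp] at this
    have h1 : ((1 : Equiv.Perm (Fin n)) : Fin n → Fin n) i = i := rfl
    rw [h1] at this
    linarith [this]
  rw [dotR_ofW]
  simp only [hb] at hbi
  linarith [hbi]

lemma monotone_rearrange_eq {κ : Fin n → ℤ} {ρ : Equiv.Perm (Fin n)}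
    (h1 : Monotone (κ ∘ ⇑ρ)) (h2 : Monotone κ) : κ ∘ ⇑ρ = κ := by
  have := Tuple.unique_monotone (σ := ρ) (τ := 1) h1 (by simpa using h2)
  simpa using this

lemma exists_adjacent_invZ {g : Fin n → ℤ} {a b : Fin n} (hab : a < b) (hgt : g b < g a) :
    ∃ l : ℕ, ∃ hl : l + 1 < n, g ⟨l + 1, hl⟩ < g ⟨l, by omega⟩ := by
  by_contra hcon
  push_neg at hcon
  have hmono : ∀ (d : ℕ) (a' b' : Fin n), (b' : ℕ) = (a' : ℕ) + d → g a' ≤ g b' := by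
    intro d
    induction d with
    | zero => intro a' b' h; have : a' = b' := Fin.ext (by omega); rw [this]
    | succ d ih =>
        intro a' b' h
        have hdn : (a' : ℕ) + d < n := by omega
        have hlt : (a' : ℕ) + d + 1 < n := by omega
        have h1 := ih a' ⟨(a' : ℕ) + d, hdn⟩ (by simp)
        have h2 := hcon ((a' : ℕ) + d) hlt
        have hb' : b' = ⟨(a' : ℕ) + d + 1, hlt⟩ := by
          apply Fin.ext; simp only [Fin.val_mk]; omega
        rw [hb']
        omega
  have := hmono ((b : ℕ) - (a : ℕ)) a b (by have : (a:ℕ) < (b:ℕ) := hab; omega)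
  omega

end Aux5

section Aux6

variable {n f : ℕ} {p : ℕ}

open Classical in
noncomputable def InvC (μ : Xf n f) : ℕ :=
  (Finset.univ.filter fun q : Fin f × Fin n × Fin n =>
    q.2.1 < q.2.2 ∧ μ q.1 q.2.2 < μ q.1 q.2.1).card

lemma prR_shift_neg (μ : Xf n f) (D : RPt n f) (j : Fin f) (a b : Fin n) :
    prR (shiftP p (fun j' i => - μ j' i) D) j a b
      = prR D j a b + (p : ℝ) * ((μ j b - μ j a : ℤ) : ℝ) := by
  rw [prR_shiftP]
  push_cast
  ring

lemma dotR_ofW_addRoot (σ : WfG n f) (c : ℝ) (j : Fin f) (i k : Fin n) (x : RPt n f) :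
    dotR p (ofW σ) (addRoot c j i k x)
      = addRoot c j (σ j i) (σ j k) (dotR p (ofW σ) x) := by
  funext j₂ i₂
  by_cases hj : j₂ = j
  · subst hj
    rw [dotR_ofW]
    simp only [addRoot, if_pos rfl, if_true, eq_self_iff_true]
    rw [dotR_ofW]
    have hroot : rootR i k ((σ j₂)⁻¹ i₂) = rootR (σ j₂ i) (σ j₂ k) i₂ := by
      simp only [rootR, Equiv.Perm.inv_eq_iff_eq]
    rw [hroot]
    ring
  · rw [dotR_ofW]
    simp only [addRoot, if_neg hj]
    rw [dotR_ofW]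

lemma claimG_base (hp : 0 < p) {D : RPt n f} (hD : dominantPt D) (hDreg : regular p D)
    (ν : Xf n f) (hν : ∀ (j : Fin f) (a b : Fin n), a ≤ b → ν j b ≤ ν j a)
    (μ : Xf n f) (hrearr : ∀ j, ∃ ρ : Equiv.Perm (Fin n), μ j = fun i => ν j (ρ i))
    (hc : InvC μ = 0)
    (σ : WfG n f) (hσ : dominantPt (dotR p (ofW σ) (shiftP p (fun j' i => - μ j' i) D))) :
    alcoveLE p (dotR p (ofW σ) (shiftP p (fun j' i => - μ j' i) D))
      (shiftP p (fun j' i => - ν j' (Fin.rev i)) D) := by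
  have hmono : ∀ j, Monotone (μ j) := by
    intro j a b hab
    rcases eq_or_lt_of_le hab with h | h
    · rw [h]
    · by_contra hcon
      push_neg at hcon
      have hmem : ((j, a, b) : Fin f × Fin n × Fin n) ∈
          (Finset.univ.filter fun q : Fin f × Fin n × Fin n =>
            q.2.1 < q.2.2 ∧ μ q.1 q.2.2 < μ q.1 q.2.1) :=
        Finset.mem_filter.mpr ⟨Finset.mem_univ _, h, hcon⟩
      rw [Finset.card_eq_zero.mp hc] at hmem
      exact absurd hmem (Finset.notMem_empty _)
  have hμν : ∀ j, (fun i => ν j (Fin.rev i)) = μ j := by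
    intro j
    obtain ⟨ρ, hρ⟩ := hrearr j
    have hcomp : (μ j ∘ ⇑((ρ⁻¹ * Fin.revPerm : Equiv.Perm (Fin n)))) = fun i => ν j (Fin.rev i) := by
      funext i
      simp only [Function.comp, hρ]
      have h1 : ((ρ⁻¹ * Fin.revPerm : Equiv.Perm (Fin n))) i = ρ⁻¹ (Fin.rev i) := rfl
      rw [h1, show ρ (ρ⁻¹ (Fin.rev i)) = Fin.rev i from ρ.apply_symm_apply _]
    have hmono2 : Monotone (μ j ∘ ⇑((ρ⁻¹ * Fin.revPerm : Equiv.Perm (Fin n)))) := by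
      rw [hcomp]
      intro a b hab
      exact hν j (Fin.rev b) (Fin.rev a) (Fin.rev_le_rev.mpr hab)
    have := monotone_rearrange_eq hmono2 (hmono j)
    rw [← hcomp, this]
  have hYZ : (fun j' i => - μ j' i) = (fun (j' : Fin f) i => - ν j' (Fin.rev i)) := by
    funext j' i
    rw [← hμν j']
  have hZdom : dominantPt (shiftP p (fun j' i => - ν j' (Fin.rev i)) D) := by
    intro j a b hab
    have heq := prR_shift_neg (p := p) (fun j' i => ν j' (Fin.rev i)) D j a b
    rw [heq]
    have h1 : 0 < prR D j a b := hD j a b hab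
    have h2 : (0 : ℤ) ≤ ν j (Fin.rev b) - ν j (Fin.rev a) := by
      have := hν j (Fin.rev b) (Fin.rev a) (Fin.rev_le_rev.mpr hab.le)
      omega
    have h3 : (0 : ℝ) ≤ (p : ℝ) * ((ν j (Fin.rev b) - ν j (Fin.rev a) : ℤ) : ℝ) := by
      apply mul_nonneg (by positivity)
      exact_mod_cast h2
    linarith
  rw [hYZ] at hσ ⊢
  rw [dominant_rearrange_eq σ hZdom hσ]
  exact Relation.ReflTransGen.refl

end Aux6

section Aux6b

variable {n f : ℕ} {p : ℕ}

lemma addRoot_comm (c : ℝ) (j : Fin f) (i k : Fin n) (x : RPt n f) :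
    addRoot c j i k x = addRoot (-c) j k i x := by
  funext j' i'
  simp only [addRoot, rootR]
  split <;> ring

open Classical in
lemma card_filter_swap_lt' {il il1 : Fin n} (hadjv : (il : ℕ) + 1 = (il1 : ℕ)) (j : Fin f)
    (P P' : Fin f → Fin n → Fin n → Prop)
    (hswap : ∀ a b, P' j a b ↔ P j (Equiv.swap il il1 a) (Equiv.swap il il1 b))
    (hoff : ∀ j' a b, j' ≠ j → (P' j' a b ↔ P j' a b))
    (hanti : ∀ j' a b, P j' a b → ¬ P j' b a)
    (hP0 : P j il il1) :
    (Finset.univ.filter fun q : Fin f × Fin n × Fin n =>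
        q.2.1 < q.2.2 ∧ P' q.1 q.2.1 q.2.2).card
      < (Finset.univ.filter fun q : Fin f × Fin n × Fin n =>
        q.2.1 < q.2.2 ∧ P q.1 q.2.1 q.2.2).card := by
  have hl : (il : ℕ) + 1 < n := by have := il1.isLt; omega
  have e2 : il1 = (⟨(il : ℕ) + 1, hl⟩ : Fin n) := Fin.ext (by simp only [Fin.val_mk]; omega)
  subst e2
  exact card_filter_swap_lt hl j P P' hswap hoff hanti hP0

lemma shift_swap_addRoot (μ μ' : Xf n f) (D : RPt n f) (j : Fin f) {il il1 : Fin n}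
    (hne : il ≠ il1)
    (hslot : ∀ i, μ' j i = μ j (Equiv.swap il il1 i))
    (hoffμ : ∀ j', j' ≠ j → μ' j' = μ j') :
    shiftP p (fun j' i => - μ' j' i) D
      = addRoot ((p : ℝ) * (((μ j il - μ j il1 : ℤ)) : ℝ)) j il il1
          (shiftP p (fun j' i => - μ j' i) D) := by
  funext j₂ i₂
  by_cases hj : j₂ = j
  · subst hj
    simp only [shiftP, addRoot, if_pos rfl, if_true, eq_self_iff_true, hslot]
    by_cases h1 : i₂ = il
    · subst h1
      rw [Equiv.swap_apply_left, rootR_left hne]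
      push_cast
      ring
    · by_cases h2 : i₂ = il1
      · subst h2
        rw [Equiv.swap_apply_right, rootR_right hne]
        push_cast
        ring
      · rw [Equiv.swap_apply_of_ne_of_ne h1 h2]
        simp only [rootR, if_neg h1, if_neg h2]
        ring
  · simp only [shiftP, addRoot, if_neg hj, hoffμ j₂ hj]

lemma claimG (hp : 0 < p) {D : RPt n f} (hD : dominantPt D) (hDreg : regular p D)
    (ν : Xf n f) (hν : ∀ (j : Fin f) (a b : Fin n), a ≤ b → ν j b ≤ ν j a) :
    ∀ (N : ℕ) (μ : Xf n f), (∀ j, ∃ ρ : Equiv.Perm (Fin n), μ j = fun i => ν j (ρ i)) →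
      InvC μ ≤ N →
      ∀ σ : WfG n f, dominantPt (dotR p (ofW σ) (shiftP p (fun j' i => - μ j' i) D)) →
        alcoveLE p (dotR p (ofW σ) (shiftP p (fun j' i => - μ j' i) D))
          (shiftP p (fun j' i => - ν j' (Fin.rev i)) D) := by
  intro N
  induction N with
  | zero =>
      intro μ hre hc σ hσ
      exact claimG_base hp hD hDreg ν hν μ hre (Nat.le_zero.mp hc) σ hσ
  | succ N ih =>
      intro μ hre hc σ hσ
      rcases Nat.eq_zero_or_pos (InvC μ) with h0 | h0
      · exact claimG_base hp hD hDreg ν hν μ hre h0 σ hσ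
      obtain ⟨⟨j, a0, b0⟩, hq⟩ := Finset.card_pos.mp h0
      obtain ⟨-, hab, hgt⟩ := Finset.mem_filter.mp hq
      obtain ⟨l, hl, hadj⟩ := exists_adjacent_invZ hab hgt
      have hln : l < n := by omega
      obtain ⟨il, il1, hilv, hil1v, hilne, hillt, hadj'⟩ :
          ∃ il il1 : Fin n, (il : ℕ) = l ∧ (il1 : ℕ) = l + 1 ∧ il ≠ il1 ∧ il < il1 ∧
            μ j il1 < μ j il := by
        refine ⟨⟨l, hln⟩, ⟨l + 1, hl⟩, rfl, rfl, ?_, ?_, hadj⟩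
        · intro h
          rw [Fin.ext_iff] at h
          simp at h
        · simp [Fin.mk_lt_mk]
      set μ' : Xf n f :=
        fun j' => if j' = j then (fun i => μ j (Equiv.swap il il1 i)) else μ j' with hμ'def
      have hslot : ∀ i, μ' j i = μ j (Equiv.swap il il1 i) := fun i => by
        simp [hμ'def]
      have hoffμ : ∀ j', j' ≠ j → μ' j' = μ j' := fun j' hj => by
        simp [hμ'def, hj]
      have hrearr' : ∀ j', ∃ ρ' : Equiv.Perm (Fin n), μ' j' = fun i => ν j' (ρ' i) := by
        intro j'
        rcases eq_or_ne j' j with rfl | hj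
        · obtain ⟨ρ, hρ⟩ := hre j'
          refine ⟨ρ * Equiv.swap il il1, ?_⟩
          funext i
          rw [hslot i, hρ]
          rfl
        · obtain ⟨ρ, hρ⟩ := hre j'
          exact ⟨ρ, by rw [hoffμ j' hj]; exact hρ⟩
      have hc' : InvC μ' < InvC μ := by
        have hadjv : (il : ℕ) + 1 = (il1 : ℕ) := by omega
        have key := card_filter_swap_lt' hadjv j (fun j' a b => μ j' b < μ j' a)
          (fun j' a b => μ' j' b < μ' j' a)
          (fun a b => by
            show μ' j b < μ' j a ↔ μ j (Equiv.swap il il1 b) < μ j (Equiv.swap il il1 a)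
            rw [hslot a, hslot b])
          (fun j' a b hj => by
            show μ' j' b < μ' j' a ↔ μ j' b < μ j' a
            rw [hoffμ j' hj])
          (fun j' a b h1 h2 => by omega)
          hadj'
        unfold InvC
        convert key using 2 <;> congr!
      have hδ : (1 : ℤ) ≤ μ j il - μ j il1 := by omega
      have hYY' : shiftP p (fun j' i => - μ' j' i) D
          = addRoot ((p : ℝ) * (((μ j il - μ j il1 : ℤ)) : ℝ)) j il il1
              (shiftP p (fun j' i => - μ j' i) D) :=
        shift_swap_addRoot μ μ' D j hilne hslot hoffμ
      have hregY : regular p (shiftP p (fun j' i => - μ j' i) D) := regular_shiftP hDreg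
      have hregY' : regular p (shiftP p (fun j' i => - μ' j' i) D) := regular_shiftP hDreg
      have hregW : regular p (dotR p (ofW σ) (shiftP p (fun j' i => - μ j' i) D)) :=
        regular_dotR _ hregY
      have hPD : 0 < prR D j il il1 := hD j il il1 hillt
      have hprRY : prR (shiftP p (fun j' i => - μ j' i) D) j il il1
          = prR D j il il1 + (p : ℝ) * ((μ j il1 - μ j il : ℤ) : ℝ) :=
        prR_shift_neg μ D j il il1
      have hstar : (σ j)⁻¹ (σ j il) = il := (σ j).symm_apply_apply _
      have hstar1 : (σ j)⁻¹ (σ j il1) = il1 := (σ j).symm_apply_apply _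
      have hnestar : σ j il ≠ σ j il1 := fun h => hilne ((σ j).injective h)
      have hprW : prR (dotR p (ofW σ) (shiftP p (fun j' i => - μ j' i) D)) j (σ j il) (σ j il1)
          = prR (shiftP p (fun j' i => - μ j' i) D) j il il1 := by
        rw [prR_dotR_ofW, hstar, hstar1]
      rcases lt_or_gt_of_ne hnestar with hcase | hcase
      · -- σ j il < σ j il1 : translate the pair upward by two reflections
        have hpair := pairUp (p := p) hp j hcase hδ
          (dotR p (ofW σ) (shiftP p (fun j' i => - μ j' i) D))
          (fun m => regular' hregW j (σ j il) (σ j il1) m hnestar)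
        have hmidA : addRoot ((p : ℝ) * (((μ j il - μ j il1 : ℤ)) : ℝ)) j (σ j il) (σ j il1)
              (dotR p (ofW σ) (shiftP p (fun j' i => - μ j' i) D))
            = dotR p (ofW σ) (shiftP p (fun j' i => - μ' j' i) D) := by
          rw [hYY', dotR_ofW_addRoot]
        have hregMid : regular p (dotR p (ofW σ) (shiftP p (fun j' i => - μ' j' i) D)) :=
          regular_dotR _ hregY'
        obtain ⟨σ₂, hle₂, hdom₂⟩ := sort_up hregMid
        have hcomp : dotR p (ofW σ₂) (dotR p (ofW σ) (shiftP p (fun j' i => - μ' j' i) D))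
            = dotR p (ofW (fun j' => σ₂ j' * σ j')) (shiftP p (fun j' i => - μ' j' i) D) := by
          rw [← dotR_mul, ofW_mul]
        rw [hcomp] at hle₂ hdom₂
        have hIH := ih μ' hrearr' (by omega) (fun j' => σ₂ j' * σ j') hdom₂
        have h1 : alcoveLE p (dotR p (ofW σ) (shiftP p (fun j' i => - μ j' i) D))
            (dotR p (ofW σ) (shiftP p (fun j' i => - μ' j' i) D)) := by
          rw [← hmidA]
          exact hpair
        exact (h1.trans hle₂).trans hIH
      · -- σ j il1 < σ j il : a single upward reflection
        have hlt : prR (dotR p (ofW σ) (shiftP p (fun j' i => - μ j' i) D)) j (σ j il1) (σ j il)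
            < (p : ℝ) * (((μ j il - μ j il1 : ℤ)) : ℝ) := by
          have hflip : prR (dotR p (ofW σ) (shiftP p (fun j' i => - μ j' i) D)) j (σ j il1) (σ j il)
              = - prR (shiftP p (fun j' i => - μ j' i) D) j il il1 := by
            rw [prR_dotR_ofW, hstar, hstar1, prR_neg]
          rw [hflip, hprRY]
          push_cast
          linarith [hPD]
        have hstep : upStep p (dotR p (ofW σ) (shiftP p (fun j' i => - μ j' i) D))
            (reflPt p j (σ j il1) (σ j il) (μ j il - μ j il1)
              (dotR p (ofW σ) (shiftP p (fun j' i => - μ j' i) D))) :=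
          Or.inr ⟨j, σ j il1, σ j il, μ j il - μ j il1, hcase, hlt, rfl⟩
        set σ' : WfG n f := fun j' => σ j' * swapW j il il1 j' with hσ'def
        have hswapWj : swapW j il il1 j = Equiv.swap il il1 := by simp [swapW]
        have hσ'il : σ' j il = σ j il1 := by
          simp only [hσ'def, hswapWj]
          show σ j (Equiv.swap il il1 il) = σ j il1
          rw [Equiv.swap_apply_left]
        have hσ'il1 : σ' j il1 = σ j il := by
          simp only [hσ'def, hswapWj]
          show σ j (Equiv.swap il il1 il1) = σ j il
          rw [Equiv.swap_apply_right]
        have hmidB : reflPt p j (σ j il1) (σ j il) (μ j il - μ j il1)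
              (dotR p (ofW σ) (shiftP p (fun j' i => - μ j' i) D))
            = dotR p (ofW σ') (shiftP p (fun j' i => - μ' j' i) D) := by
          have e0 : dotR p (ofW σ') (shiftP p (fun j' i => - μ j' i) D)
              = dotR p (ofW σ) (dotR p (ofW (swapW j il il1))
                  (shiftP p (fun j' i => - μ j' i) D)) := by
            rw [← dotR_mul, ofW_mul]
          have e1 : dotR p (ofW (swapW j il il1)) (shiftP p (fun j' i => - μ j' i) D)
              = addRoot ((p : ℝ) * (((0 : ℤ)) : ℝ)
                    - prR (shiftP p (fun j' i => - μ j' i) D) j il il1) j il il1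
                  (shiftP p (fun j' i => - μ j' i) D) := by
            rw [← reflPt_zero_eq j hilne, reflPt_eq_addRoot]
          have e2 : dotR p (ofW σ') (shiftP p (fun j' i => - μ j' i) D)
              = addRoot (prR (shiftP p (fun j' i => - μ j' i) D) j il il1
                    - (p : ℝ) * (((0 : ℤ)) : ℝ)) j (σ j il1) (σ j il)
                  (dotR p (ofW σ) (shiftP p (fun j' i => - μ j' i) D)) := by
            rw [e0, e1, dotR_ofW_addRoot, addRoot_comm]
            ring_nf
          rw [reflPt_eq_addRoot, hYY', dotR_ofW_addRoot, hσ'il, hσ'il1, e2, addRoot_addRoot]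
          congr 1
          rw [prR_dotR_ofW, hstar, hstar1, prR_neg]
          push_cast
          ring
        have hregMid : regular p (dotR p (ofW σ') (shiftP p (fun j' i => - μ' j' i) D)) :=
          regular_dotR _ hregY'
        obtain ⟨σ₂, hle₂, hdom₂⟩ := sort_up hregMid
        have hcomp : dotR p (ofW σ₂) (dotR p (ofW σ') (shiftP p (fun j' i => - μ' j' i) D))
            = dotR p (ofW (fun j' => σ₂ j' * σ' j')) (shiftP p (fun j' i => - μ' j' i) D) := by
          rw [← dotR_mul, ofW_mul]
        rw [hcomp] at hle₂ hdom₂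
        have hIH := ih μ' hrearr' (by omega) (fun j' => σ₂ j' * σ' j') hdom₂
        have h1 : alcoveLE p (dotR p (ofW σ) (shiftP p (fun j' i => - μ j' i) D))
            (dotR p (ofW σ') (shiftP p (fun j' i => - μ' j' i) D)) := by
          rw [← hmidB]
          exact Relation.ReflTransGen.single hstep
        exact (h1.trans hle₂).trans hIH

end Aux6b

section Aux7

variable {n f : ℕ} {p : ℕ}

lemma dotR_transl (γ : Xf n f) (x : RPt n f) : dotR p (transl γ) x = shiftP p γ x := by
  funext j i
  simp [dotR, transl, shiftP, permAct]
  ring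

lemma transl_inv (γ : Xf n f) : (transl γ : Wtf n f)⁻¹ = transl (fun j i => - γ j i) := by
  refine Wtf.ext' rfl ?_
  funext j i
  show -(permAct ((transl γ).w j) ((transl γ).t j)) i = - γ j i
  simp [transl, permAct]

lemma ofW_transl_comm (τ : WfG n f) (γ : Xf n f) :
    ofW τ * transl γ = transl (fun j => permAct (τ j) (γ j)) * ofW τ := by
  refine Wtf.ext' ?_ ?_
  · funext j
    show (ofW τ).w j * (transl γ).w j = (transl _).w j * (ofW τ).w j
    simp [ofW, transl]
  · funext j i
    show ((transl γ).t j + permAct ((transl γ).w j)⁻¹ ((ofW τ).t j)) i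
        = ((ofW τ).t j + permAct ((ofW τ).w j)⁻¹ ((transl (fun j => permAct (τ j) (γ j))).t j)) i
    simp [ofW, transl, permAct]

lemma transl_w0_comm {gg : Wtf n f} (hgg : IsW0 gg) (γ : Xf n f) :
    transl γ * gg = gg * transl (fun j i => γ j (Fin.rev i)) := by
  refine Wtf.ext' ?_ ?_
  · funext j
    show (transl γ).w j * gg.w j = gg.w j * (transl _).w j
    simp [transl]
  · funext j i
    show (gg.t j + permAct (gg.w j)⁻¹ ((transl γ).t j)) i
        = ((transl (fun j i => γ j (Fin.rev i))).t j + permAct ((transl _).w j)⁻¹ (gg.t j)) i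
    simp only [transl, permAct, Pi.add_apply]
    rw [hgg j]
    have : ((Fin.revPerm : Equiv.Perm (Fin n))⁻¹)⁻¹ i = Fin.rev i := rfl
    rw [this]
    have h1 : ((1 : Equiv.Perm (Fin n))⁻¹)⁻¹ i = i := rfl
    rw [h1]
    ring

lemma St_transl (γ : Xf n f) (j : Fin f) : St (transl γ) j = ∑ i, γ j i := rfl

lemma St_ofW (σ : WfG n f) (j : Fin f) : St (ofW σ) j = 0 := by
  simp [St, ofW]

lemma IsW0_inv_wh : IsW0 (Wtf.inv (whElt n f)) := by
  intro j
  show ((whElt n f).w j)⁻¹ = Fin.revPerm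
  show (Fin.revPerm : Equiv.Perm (Fin n))⁻¹ = Fin.revPerm
  rw [Equiv.Perm.inv_def, Fin.revPerm_symm]

end Aux7

/-- if `w̃ = w̃₂⁻¹ w' w̃₁` with `w' ∈ Wf`, `w̃₁, w̃₂ ∈ Wtf⁺` and
`w̃₁ ↑ w̃_h⁻¹ w̃₂`, then `w̃` admits such a factorization `w̃ = w̃₃⁻¹ w'' w̃_λ`
in which moreover `w̃_λ · C₀` is p-restricted. -/
theorem statement12 (n f p : ℕ) (hn : 2 ≤ n) (hf : 1 ≤ f) (hp : p.Prime) (hnp : n < p)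
    (a : Wtf n f) (w' : WfG n f) (w1 w2 : Wtf n f)
    (h1 : w1 ∈ WtfPlus n f p) (h2 : w2 ∈ WtfPlus n f p)
    (hup : upOrd p w1 (Wtf.mul (Wtf.inv (whElt n f)) w2))
    (hfact : a = Wtf.mul (Wtf.inv w2) (Wtf.mul (ofW w') w1)) :
    ∃ (w'' : WfG n f) (wl w3 : Wtf n f),
      wl ∈ WtfPlus n f p ∧ w3 ∈ WtfPlus n f p ∧
      upOrd p wl (Wtf.mul (Wtf.inv (whElt n f)) w3) ∧
      a = Wtf.mul (Wtf.inv w3) (Wtf.mul (ofW w'') wl) ∧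
      restrictedPt p (dotR p wl (basePt n f)) := by
  have hp0 : 0 < p := by omega
  have hpR : (0 : ℝ) < (p : ℝ) := by exact_mod_cast hp0
  have hbreg : regular p (basePt n f) := regular_basePt hn hnp
  set D1 := dotR p w1 (basePt n f) with hD1def
  have hD1dom : dominantPt D1 := h1
  have hD1reg : regular p D1 := regular_dotR w1 hbreg
  set aa : Fin f → ℕ → ℤ := fun j l =>
    if h : l + 1 < n then ⌊prR D1 j ⟨l, by omega⟩ ⟨l + 1, h⟩ / (p : ℝ)⌋ else 0 with haadef
  set ν : Xf n f := fun j i => ∑ l ∈ Finset.Ico (i : ℕ) (n - 1), aa j l with hνdef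
  have haann : ∀ j l, 0 ≤ aa j l := by
    intro j l
    show 0 ≤ (if h : l + 1 < n then ⌊prR D1 j ⟨l, by omega⟩ ⟨l + 1, h⟩ / (p : ℝ)⌋ else 0)
    split
    · next h =>
      apply Int.floor_nonneg.mpr
      apply div_nonneg _ (le_of_lt hpR)
      exact le_of_lt (hD1dom j _ _ (by simp [Fin.mk_lt_mk]))
    · next h => exact le_refl 0
  have hνdec : ∀ (j : Fin f) (c b : Fin n), c ≤ b → ν j b ≤ ν j c := by
    intro j c b hcb
    rw [hνdef]
    apply Finset.sum_le_sum_of_subset_of_nonneg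
    · exact Finset.Ico_subset_Ico hcb le_rfl
    · intro l _ _
      exact haann j l
  have hνdiff : ∀ (j : Fin f) (l : ℕ) (hl : l + 1 < n),
      ν j ⟨l, by omega⟩ - ν j ⟨l + 1, hl⟩ = aa j l := by
    intro j l hl
    rw [hνdef]
    have hsplit : ∑ x ∈ Finset.Ico l (n - 1), aa j x
        = aa j l + ∑ x ∈ Finset.Ico (l + 1) (n - 1), aa j x :=
      Finset.sum_eq_sum_Ico_succ_bot (by omega) _
    simp only [Fin.val_mk]
    rw [hsplit]
    ring
  set X := shiftP p (fun j i => - ν j i) D1 with hXdef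
  have hXadj : ∀ (j : Fin f) (l : ℕ) (hl : l + 1 < n),
      0 < prR X j ⟨l, by omega⟩ ⟨l + 1, hl⟩ ∧
        prR X j ⟨l, by omega⟩ ⟨l + 1, hl⟩ < (p : ℝ) := by
    intro j l hl
    have hln : l < n := by omega
    have hmk : (⟨l, hln⟩ : Fin n) < ⟨l + 1, hl⟩ := by simp [Fin.mk_lt_mk]
    have hd : prR X j ⟨l, hln⟩ ⟨l + 1, hl⟩
        = prR D1 j ⟨l, hln⟩ ⟨l + 1, hl⟩ - (p : ℝ) * ((aa j l : ℤ) : ℝ) := by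
      rw [hXdef, prR_shift_neg]
      rw [show ν j ⟨l + 1, hl⟩ - ν j ⟨l, hln⟩ = - aa j l from by
        rw [← hνdiff j l hl]; ring]
      push_cast
      ring
    set d := prR D1 j ⟨l, hln⟩ ⟨l + 1, hl⟩ with hddef
    have haal : aa j l = ⌊d / (p : ℝ)⌋ := by
      show (if h : l + 1 < n then ⌊prR D1 j ⟨l, by omega⟩ ⟨l + 1, h⟩ / (p : ℝ)⌋ else 0)
        = ⌊d / (p : ℝ)⌋
      rw [dif_pos hl]
    have hfl1 : (p : ℝ) * ((⌊d / (p : ℝ)⌋ : ℤ) : ℝ) ≤ d := by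
      have h0 := Int.floor_le (d / (p : ℝ))
      have := (le_div_iff₀ hpR).mp h0
      linarith
    have hne : d ≠ (p : ℝ) * ((⌊d / (p : ℝ)⌋ : ℤ) : ℝ) :=
      regular' hD1reg j _ _ _ hmk.ne
    have hfl2 : d < (p : ℝ) * ((⌊d / (p : ℝ)⌋ : ℤ) : ℝ) + (p : ℝ) := by
      have h0 := Int.lt_floor_add_one (d / (p : ℝ))
      have := (div_lt_iff₀ hpR).mp h0
      push_cast at this ⊢
      linarith
    constructor
    · rw [hd, haal]
      rcases lt_or_eq_of_le hfl1 with h | h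
      · linarith
      · exact absurd h.symm hne
    · rw [hd, haal]
      linarith
  have hXdom : dominantPt X := by
    intro j i k hik
    have hik' : (i : ℕ) < (k : ℕ) := hik
    rw [prR_eq_sum_cprR X j ((k : ℕ) - (i : ℕ)) i k (by omega)]
    apply Finset.sum_pos
    · intro l hlm
      have hm := Finset.mem_Ico.mp hlm
      have hl : l + 1 < n := by have := k.isLt; omega
      simp only [cprR, dif_pos hl]
      exact (hXadj j l hl).1
    · exact Finset.nonempty_Ico.mpr (by omega)
  have hXrestr : restrictedPt p X := by
    intro j i h
    exact hXadj j (i : ℕ) h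
  set γν : Xf n f := fun j i => - ν j i with hγν
  set wl := Wtf.mul (transl γν) w1 with hwl
  have hwlpt : dotR p wl (basePt n f) = X := by
    rw [hwl, Wtf.mul_def, dotR_mul, dotR_transl, ← hD1def, hXdef]
  -- w2 side
  set D2 := dotR p w2 (basePt n f) with hD2def
  have hD2dom : dominantPt D2 := h2
  have hD2reg : regular p D2 := regular_dotR w2 hbreg
  set μ0 : Xf n f := fun j i => ν j (((w' j)⁻¹ : Equiv.Perm (Fin n)) i) with hμ0
  set γμ : Xf n f := fun j i => - μ0 j i with hγμ
  have hregY0 : regular p (shiftP p γμ D2) := regular_shiftP hD2reg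
  obtain ⟨σs, hles, hdoms⟩ := sort_up hregY0
  have hre : ∀ j, ∃ ρ : Equiv.Perm (Fin n), μ0 j = fun i => ν j (ρ i) :=
    fun j => ⟨(w' j)⁻¹, rfl⟩
  have hG := claimG hp0 hD2dom hD2reg ν hνdec (InvC μ0) μ0 hre le_rfl σs hdoms
  set Z := shiftP p (fun j i => - ν j (Fin.rev i)) D2 with hZdef
  set gg := Wtf.inv (whElt n f) with hgg
  have hggW0 : IsW0 gg := IsW0_inv_wh
  have hrev := alcoveLE_rev hggW0 hG
  have hch1 := alcoveLE_shiftP γν hup.1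
  have hQ : shiftP p γν (dotR p (Wtf.mul (Wtf.inv (whElt n f)) w2) (basePt n f))
      = dotR p gg Z := by
    have e1 : shiftP p γν (dotR p (Wtf.mul (Wtf.inv (whElt n f)) w2) (basePt n f))
        = dotR p (transl γν * (gg * w2)) (basePt n f) := by
      rw [dotR_mul, dotR_transl, hgg, Wtf.mul_def]
    have e2 : dotR p gg Z
        = dotR p (gg * (transl (fun j i => γν j (Fin.rev i)) * w2)) (basePt n f) := by
      rw [dotR_mul, dotR_mul, dotR_transl, hZdef, ← hD2def]
    have e3 : transl γν * (gg * w2)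
        = gg * (transl (fun j i => γν j (Fin.rev i)) * w2) := by
      rw [← mul_assoc, ← mul_assoc, transl_w0_comm hggW0 γν]
    rw [e1, e3, ← e2]
  set w3 := Wtf.mul (ofW σs) (Wtf.mul (transl γμ) w2) with hw3
  have hw3pt : dotR p w3 (basePt n f) = dotR p (ofW σs) (shiftP p γμ D2) := by
    rw [hw3, Wtf.mul_def, Wtf.mul_def, dotR_mul, dotR_mul, dotR_transl, ← hD2def]
  refine ⟨fun j => σs j * w' j, wl, w3, ?_, ?_, ⟨?_, ?_⟩, ?_, ?_⟩
  · show dominantPt (dotR p wl (basePt n f))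
    rw [hwlpt]
    exact hXdom
  · show dominantPt (dotR p w3 (basePt n f))
    rw [hw3pt]
    exact hdoms
  · -- alcoveLE
    rw [Wtf.mul_def, dotR_mul, hw3pt, hwlpt]
    refine Relation.ReflTransGen.trans ?_ hrev
    rw [← hQ]
    exact hch1
  · -- Waf membership
    rw [mem_Waf_iff]
    intro j
    have hws := hup.2
    rw [mem_Waf_iff] at hws
    have hws' := hws j
    simp only [Wtf.mul_def, Wtf.inv_def, hwl, hw3, hgg] at hws' ⊢
    simp only [St_mul, St_inv, St_transl, St_ofW] at hws' ⊢
    have hsum : ∑ i, μ0 j i = ∑ i, ν j i := by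
      rw [hμ0]
      exact Equiv.sum_comp ((w' j)⁻¹) (ν j)
    have hγsum : ∑ i, γμ j i = ∑ i, γν j i := by
      rw [hγμ, hγν]
      simp only [Finset.sum_neg_distrib]
      rw [hsum]
    linarith [hγsum, hws']
  · -- factorization
    rw [hfact]
    simp only [Wtf.mul_def, Wtf.inv_def, hwl, hw3]
    rw [← ofW_mul]
    have hcomm : ofW w' * transl γν = transl γμ * ofW w' := by
      rw [ofW_transl_comm]
      congr 1
    rw [show (ofW σs * ofW w') * (transl γν * w1)
        = ofW σs * ((ofW w' * transl γν) * w1) from by group]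
    rw [hcomm]
    group
  · show restrictedPt p (dotR p wl (basePt n f))
    rw [hwlpt]
    exact hXrestr

end LLLSerre
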